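/- For every n ≥ 1, the limit lim_{s → 0+} β_n(s) exists, is finite, and equals ∫_0^1 (1/w)(1 − e^{−β_{n−1}(1−w)}) dw; writing β_n(0) for this value, the sequence (β_n(0))_{n ≥ 0} (with β₀(0) = 1) is non-increasing. -/

import Mathlib

open MeasureTheory Real Set Filter

/-- The recursively defined sequence of functions `β_n`:
`β₀(s) = 1 - s` and `β_n(s) = ∫_s^1 (1/w)(1 - e^{-β_{n-1}(1-w)}) dw`. -/
noncomputable def beta : ℕ → ℝ → ℝ
  | 0, s => 1 - s
  | n + 1, s => ∫ w in Set.Ioc s 1, (1 / w) * (1 - Real.exp (-(beta n (1 - w))))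

lemma integrand_bounds {n : ℕ} (hb : ∀ s ∈ Icc (0:ℝ) 1, 0 ≤ beta n s ∧ beta n s ≤ 1 - s)
    {w : ℝ} (hw : w ∈ Ioc (0:ℝ) 1) :
    0 ≤ (1 / w) * (1 - Real.exp (-(beta n (1 - w)))) ∧
      (1 / w) * (1 - Real.exp (-(beta n (1 - w)))) ≤ 1 := by
  obtain ⟨hw0, hw1⟩ := hw
  have h1w : (1 - w) ∈ Icc (0:ℝ) 1 := ⟨by linarith, by linarith⟩
  obtain ⟨h0, h1⟩ := hb _ h1w
  have hwpos : (0:ℝ) < 1 / w := by positivity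
  have hexp1 : Real.exp (-(beta n (1 - w))) ≤ 1 := by
    calc Real.exp (-(beta n (1 - w))) ≤ Real.exp 0 := Real.exp_le_exp.mpr (by linarith)
      _ = 1 := Real.exp_zero
  have hle : 1 - Real.exp (-(beta n (1 - w))) ≤ beta n (1 - w) := by
    have := Real.add_one_le_exp (-(beta n (1 - w)))
    linarith
  constructor
  · exact mul_nonneg hwpos.le (by linarith)
  · calc (1 / w) * (1 - Real.exp (-(beta n (1 - w)))) ≤ (1 / w) * w := by
          apply mul_le_mul_of_nonneg_left _ hwpos.le
          linarith
       _ = 1 := one_div_mul_cancel (ne_of_gt hw0)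

lemma integrand_contOn {n : ℕ} (hc : ContinuousOn (beta n) (Icc 0 1)) :
    ContinuousOn (fun w => (1 / w) * (1 - Real.exp (-(beta n (1 - w))))) (Ioc (0:ℝ) 1) := by
  apply ContinuousOn.mul
  · exact continuousOn_const.div continuousOn_id (fun w hw => ne_of_gt hw.1)
  · apply continuousOn_const.sub
    apply Real.continuous_exp.comp_continuousOn
    apply ContinuousOn.neg
    apply hc.comp (continuous_const.sub continuous_id).continuousOn
    intro w hw
    exact ⟨by simpa using hw.2, by simpa using hw.1.le⟩

lemma integrand_integrable {n : ℕ}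
    (hb : ∀ s ∈ Icc (0:ℝ) 1, 0 ≤ beta n s ∧ beta n s ≤ 1 - s)
    (hc : ContinuousOn (beta n) (Icc 0 1)) :
    IntegrableOn (fun w => (1 / w) * (1 - Real.exp (-(beta n (1 - w))))) (Ioc (0:ℝ) 1) := by
  refine ⟨(integrand_contOn hc).aestronglyMeasurable measurableSet_Ioc,
    HasFiniteIntegral.restrict_of_bounded (C := 1) (by simp) ?_⟩
  filter_upwards [ae_restrict_mem measurableSet_Ioc] with w hw
  obtain ⟨h0, h1⟩ := integrand_bounds hb hw
  rw [Real.norm_eq_abs, abs_of_nonneg h0]; exact h1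

lemma beta_key : ∀ n : ℕ,
    (∀ s ∈ Icc (0:ℝ) 1, 0 ≤ beta n s ∧ beta n s ≤ 1 - s) ∧
      ContinuousOn (beta n) (Icc 0 1) := by
  intro n
  induction n with
  | zero =>
    refine ⟨fun s hs => ⟨by simp [beta]; linarith [hs.2], by simp [beta]⟩, ?_⟩
    show ContinuousOn (fun s => 1 - s) _
    fun_prop
  | succ n ih =>
    obtain ⟨hb, hc⟩ := ih
    have hint := integrand_integrable hb hc
    constructor
    · intro s hs
      have hsub : Ioc s 1 ⊆ Ioc (0:ℝ) 1 := Ioc_subset_Ioc hs.1 le_rfl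
      have hint' := hint.mono_set hsub
      constructor
      · apply setIntegral_nonneg measurableSet_Ioc
        intro w hw
        exact (integrand_bounds hb (hsub hw)).1
      · show (∫ w in Set.Ioc s 1, (1 / w) * (1 - Real.exp (-(beta n (1 - w))))) ≤ 1 - s
        calc (∫ w in Set.Ioc s 1, (1 / w) * (1 - Real.exp (-(beta n (1 - w)))))
            ≤ ∫ _ in Set.Ioc s 1, (1:ℝ) := by
              apply setIntegral_mono_on hint' (integrableOn_const (by simp))
                measurableSet_Ioc
              intro w hw
              exact (integrand_bounds hb (hsub hw)).2
          _ = 1 - s := by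
              rw [setIntegral_const]
              simp [Real.volume_Ioc, ENNReal.toReal_ofReal (by linarith [hs.2] : (0:ℝ) ≤ 1 - s), hs.2]
    · have hIcc : IntegrableOn (fun w => (1 / w) * (1 - Real.exp (-(beta n (1 - w)))))
          (Icc (0:ℝ) 1) := (integrableOn_Icc_iff_integrableOn_Ioc).2 hint
      have hF := intervalIntegral.continuousOn_primitive (a := (0:ℝ)) (b := 1) hIcc
      apply ContinuousOn.congr ((continuousOn_const
        (c := ∫ w in Set.Ioc (0:ℝ) 1, (1 / w) * (1 - Real.exp (-(beta n (1 - w)))))).sub hF)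
      intro s hs
      show beta (n+1) s = _
      have hsplit : (∫ w in Set.Ioc (0:ℝ) 1, (1 / w) * (1 - Real.exp (-(beta n (1 - w)))))
          = (∫ w in Set.Ioc (0:ℝ) s, (1 / w) * (1 - Real.exp (-(beta n (1 - w)))))
            + ∫ w in Set.Ioc s 1, (1 / w) * (1 - Real.exp (-(beta n (1 - w)))) := by
        rw [← setIntegral_union (Set.Ioc_disjoint_Ioc_of_le le_rfl) measurableSet_Ioc
          (hint.mono_set (Ioc_subset_Ioc le_rfl hs.2))
          (hint.mono_set (Ioc_subset_Ioc hs.1 le_rfl)),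
          Set.Ioc_union_Ioc_eq_Ioc hs.1 hs.2]
      show (∫ w in Set.Ioc s 1, (1 / w) * (1 - Real.exp (-(beta n (1 - w))))) = _
      simp only [Pi.sub_apply]; linarith [hsplit]

lemma beta_succ_le : ∀ n : ℕ, ∀ s ∈ Icc (0:ℝ) 1, beta (n + 1) s ≤ beta n s := by
  intro n
  induction n with
  | zero =>
    intro s hs
    have := ((beta_key 1).1 s hs).2
    simpa [beta] using this
  | succ n ih =>
    intro s hs
    obtain ⟨hb, hc⟩ := beta_key n
    obtain ⟨hb', hc'⟩ := beta_key (n + 1)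
    have hint := (integrand_integrable hb hc).mono_set (Ioc_subset_Ioc hs.1 le_rfl)
    have hint' := (integrand_integrable hb' hc').mono_set (Ioc_subset_Ioc hs.1 le_rfl)
    show (∫ w in Set.Ioc s 1, (1 / w) * (1 - Real.exp (-(beta (n+1) (1 - w)))))
        ≤ ∫ w in Set.Ioc s 1, (1 / w) * (1 - Real.exp (-(beta n (1 - w))))
    apply setIntegral_mono_on hint' hint measurableSet_Ioc
    intro w hw
    have hw' : w ∈ Ioc (0:ℝ) 1 := Ioc_subset_Ioc hs.1 le_rfl hw
    have h1w : (1 - w) ∈ Icc (0:ℝ) 1 := ⟨by linarith [hw'.2], by linarith [hw'.1]⟩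
    have := ih (1 - w) h1w
    have hw0 : (0:ℝ) < w := hw'.1
    have hwpos : (0:ℝ) ≤ 1 / w := by positivity
    apply mul_le_mul_of_nonneg_left _ hwpos
    have : Real.exp (-(beta n (1 - w))) ≤ Real.exp (-(beta (n+1) (1 - w))) :=
      Real.exp_le_exp.mpr (by linarith)
    linarith

/-- For every `n ≥ 1`, `lim_{s→0+} β_n(s)` exists, is finite, and
equals `∫_0^1 (1/w)(1 − e^{−β_{n−1}(1−w)}) dw =: β_n(0)`; moreover, with
`β₀(0) = 1`, the sequence `(β_n(0))_{n ≥ 0}` is non-increasing. -/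
theorem stmt8 :
    (∀ n : ℕ, 1 ≤ n →
      Filter.Tendsto (fun s => beta n s) (nhdsWithin 0 (Set.Ioi 0))
        (nhds (∫ w in Set.Ioc (0:ℝ) 1,
          (1 / w) * (1 - Real.exp (-(beta (n - 1) (1 - w))))))) ∧
    (∀ n : ℕ, 1 ≤ n →
      beta n 0 = ∫ w in Set.Ioc (0:ℝ) 1,
        (1 / w) * (1 - Real.exp (-(beta (n - 1) (1 - w))))) ∧
    beta 0 0 = 1 ∧
    Antitone (fun n : ℕ => beta n 0) := by
  have hval : ∀ n : ℕ, 1 ≤ n → beta n 0 = ∫ w in Set.Ioc (0:ℝ) 1,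
      (1 / w) * (1 - Real.exp (-(beta (n - 1) (1 - w)))) := by
    intro n hn
    obtain ⟨m, rfl⟩ := Nat.exists_eq_add_of_le' hn
    simp only [Nat.add_sub_cancel]
    rfl
  refine ⟨?_, hval, by simp [beta], ?_⟩
  · intro n hn
    have hc := (beta_key n).2
    have h0 : (0:ℝ) ∈ Icc (0:ℝ) 1 := ⟨le_rfl, zero_le_one⟩
    have htend : Filter.Tendsto (beta n) (nhdsWithin 0 (Icc 0 1)) (nhds (beta n 0)) :=
      hc 0 h0
    have heq : nhdsWithin (0:ℝ) (Set.Ioi 0) = nhdsWithin 0 (Set.Ioc 0 1) :=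
      (nhdsWithin_Ioc_eq_nhdsGT one_pos).symm
    rw [← hval n hn]
    rw [heq]
    exact htend.mono_left (nhdsWithin_mono _ Ioc_subset_Icc_self)
  · apply antitone_nat_of_succ_le
    intro n
    exact beta_succ_le n 0 ⟨le_rfl, zero_le_one⟩
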